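/- H∞ Riccati inequality implies induced L₂ gain bound (bounded real lemma, sufficiency, stable case): if A is Hurwitz and there exists P ≻ 0 with P A + Aᵀ P + (1/ε²) P B Bᵀ P + Cᵀ C ≺ 0, then the transfer function T(s) = C (sI − A)⁻¹ B satisfies ‖T(iω)‖ < ε for all real ω. -/

import Mathlib

open Matrix

private lemma star_map_mulVec {k l : ℕ} (X : Matrix (Fin k) (Fin l) ℝ) (y : Fin l → ℂ) :
    star ((X.map (Complex.ofReal : ℝ → ℂ)) *ᵥ y) = (X.map Complex.ofReal) *ᵥ (star y) := by
  funext i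
  simp [mulVec, dotProduct, Matrix.map_apply, Complex.conj_ofReal]

private lemma re_dot_map {k : ℕ} (Q : Matrix (Fin k) (Fin k) ℝ) (x : Fin k → ℂ) :
    (star x ⬝ᵥ (Q.map (Complex.ofReal : ℝ → ℂ)) *ᵥ x).re
      = (fun i => (x i).re) ⬝ᵥ Q *ᵥ (fun i => (x i).re)
        + (fun i => (x i).im) ⬝ᵥ Q *ᵥ (fun i => (x i).im) := by
  simp only [dotProduct, mulVec, Matrix.map_apply, Pi.star_apply, Complex.re_sum,
    Finset.mul_sum, ← Finset.sum_add_distrib]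
  refine Finset.sum_congr rfl fun i _ => ?_
  refine Finset.sum_congr rfl fun j _ => ?_
  simp [Complex.mul_re, Complex.mul_im]

private lemma posdef_complex {k : ℕ} {Q : Matrix (Fin k) (Fin k) ℝ} (hQ : Q.PosDef)
    (x : Fin k → ℂ) (hx : x ≠ 0) : 0 < (star x ⬝ᵥ (Q.map (Complex.ofReal : ℝ → ℂ)) *ᵥ x).re := by
  rw [re_dot_map]
  set a : Fin k → ℝ := fun i => (x i).re with ha
  set b : Fin k → ℝ := fun i => (x i).im with hb
  have hab : a ≠ 0 ∨ b ≠ 0 := by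
    by_contra h
    push_neg at h
    apply hx
    funext i
    have h1 : a i = 0 := by rw [h.1]; rfl
    have h2 : b i = 0 := by rw [h.2]; rfl
    exact Complex.ext h1 h2
  have hsa : 0 ≤ a ⬝ᵥ Q *ᵥ a := by simpa using hQ.posSemidef.dotProduct_mulVec_nonneg a
  have hsb : 0 ≤ b ⬝ᵥ Q *ᵥ b := by simpa using hQ.posSemidef.dotProduct_mulVec_nonneg b
  rcases hab with h | h
  · have := hQ.dotProduct_mulVec_pos h; simp only [star_trivial] at this; linarith
  · have := hQ.dotProduct_mulVec_pos h; simp only [star_trivial] at this; linarith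

private lemma normsq_eq {k : ℕ} (z : Fin k → ℂ) :
    ‖(WithLp.equiv 2 (Fin k → ℂ)).symm z‖ ^ 2 = (star z ⬝ᵥ z).re := by
  rw [← inner_self_eq_norm_sq (𝕜 := ℂ), EuclideanSpace.inner_eq_star_dotProduct, dotProduct_comm]
  rfl

private lemma dpm {k l : ℕ} (X : Matrix (Fin k) (Fin l) ℂ) (y : Fin k → ℂ) (z : Fin l → ℂ) :
    y ⬝ᵥ (X *ᵥ z) = (Xᵀ *ᵥ y) ⬝ᵥ z := by
  rw [Matrix.dotProduct_mulVec, Matrix.mulVec_transpose]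

set_option maxHeartbeats 2000000

/-- Bounded real lemma (sufficiency, stable case): if `A` is Hurwitz and
`P ≻ 0` satisfies `P A + Aᵀ P + (1/ε²) P B Bᵀ P + Cᵀ C ≺ 0`, then the transfer
function `T(iω) = C (iωI − A)⁻¹ B` has spectral norm `< ε` for all real `ω`. -/
theorem bounded_real_lemma_sufficiency {n m p : ℕ}
    (A P : Matrix (Fin n) (Fin n) ℝ) (B : Matrix (Fin n) (Fin m) ℝ)
    (C : Matrix (Fin p) (Fin n) ℝ) (ε : ℝ) (hε : 0 < ε)
    (hHurwitz : ∀ μ ∈ spectrum ℂ (A.map (Complex.ofReal : ℝ → ℂ)), μ.re < 0)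
    (hP : P.PosDef)
    (hRiccati : (-(P * A + Aᵀ * P + (ε ^ 2)⁻¹ • (P * B * Bᵀ * P) + Cᵀ * C)).PosDef) :
    ∀ ω : ℝ,
      ‖LinearMap.toContinuousLinearMap (Matrix.toEuclideanLin
        ((C.map (Complex.ofReal : ℝ → ℂ)) *
          ((Complex.I * ω) • (1 : Matrix (Fin n) (Fin n) ℂ) -
            A.map (Complex.ofReal : ℝ → ℂ))⁻¹ *
          (B.map (Complex.ofReal : ℝ → ℂ))))‖ < ε := by
  intro ω
  set Ac := A.map (Complex.ofReal : ℝ → ℂ) with hAc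
  set Bc := B.map (Complex.ofReal : ℝ → ℂ) with hBc
  set Cc := C.map (Complex.ofReal : ℝ → ℂ) with hCc
  set Pc := P.map (Complex.ofReal : ℝ → ℂ) with hPc
  set M := (Complex.I * ω) • (1 : Matrix (Fin n) (Fin n) ℂ) - Ac with hM
  set N := Cc * M⁻¹ * Bc with hN
  set T := LinearMap.toContinuousLinearMap (Matrix.toEuclideanLin N) with hT
  -- invertibility of M
  have hμ : (Complex.I * ω) ∉ spectrum ℂ Ac := by
    intro h
    have := hHurwitz _ h
    simp [Complex.mul_re] at this
  have hMunit : IsUnit M := by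
    rw [spectrum.notMem_iff, Algebra.algebraMap_eq_smul_one] at hμ
    exact hμ
  have hMdet : IsUnit M.det := (Matrix.isUnit_iff_isUnit_det M).mp hMunit
  have hMinv : M * M⁻¹ = 1 := Matrix.mul_nonsing_inv M hMdet
  -- symmetry of P over ℂ
  have hPT : Pcᵀ = Pc := by
    have hs := hP.1
    ext i j
    have := congrFun (congrFun hs i) j
    simp only [conjTranspose_apply, star_trivial] at this
    simp [hPc, Matrix.transpose_apply, Matrix.map_apply, this]
  -- map of the Riccati matrix
  have hmap : ((-(P * A + Aᵀ * P + (ε ^ 2)⁻¹ • (P * B * Bᵀ * P) + Cᵀ * C)).map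
        (Complex.ofReal : ℝ → ℂ))
      = -(Pc * Ac + Acᵀ * Pc + (((ε ^ 2)⁻¹ : ℝ) : ℂ) • (Pc * Bc * Bcᵀ * Pc) + Ccᵀ * Cc) := by
    ext i j
    simp only [hPc, hAc, hBc, hCc, Matrix.map_apply, Matrix.neg_apply, Matrix.add_apply, Matrix.smul_apply,
      Matrix.mul_apply, Matrix.transpose_apply, smul_eq_mul, Finset.mul_sum]
    push_cast
    ring_nf
  -- the key pointwise inequality
  have hkey : ∀ uf : Fin m → ℂ, uf ≠ 0 →
      (star (N *ᵥ uf) ⬝ᵥ (N *ᵥ uf)).re < ε ^ 2 * (star uf ⬝ᵥ uf).re := by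
    intro uf huf
    set x := (M⁻¹ * Bc) *ᵥ uf with hx
    have hNx : N *ᵥ uf = Cc *ᵥ x := by
      rw [hx, Matrix.mulVec_mulVec, hN, Matrix.mul_assoc]
    have hMx : M *ᵥ x = Bc *ᵥ uf := by
      rw [hx, Matrix.mulVec_mulVec, ← Matrix.mul_assoc, hMinv, Matrix.one_mul]
    have hAx : Ac *ᵥ x = (Complex.I * ω) • x - Bc *ᵥ uf := by
      have : ((Complex.I * ω) • (1 : Matrix (Fin n) (Fin n) ℂ) - Ac) *ᵥ x = Bc *ᵥ uf := hMx
      rw [Matrix.sub_mulVec, Matrix.smul_mulVec, Matrix.one_mulVec] at this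
      linear_combination (norm := module) -this
    set v := Bcᵀ *ᵥ (Pc *ᵥ x) with hv
    set w := Cc *ᵥ x with hw
    clear_value x v w
    have hufpos : 0 < (star uf ⬝ᵥ uf).re := by
      have h1 := normsq_eq uf
      have h2 : (WithLp.equiv 2 (Fin m → ℂ)).symm uf ≠ 0 := by
        intro h
        apply huf
        have := congrArg (WithLp.equiv 2 (Fin m → ℂ)) h
        simpa using this
      have h3 := pow_pos (norm_pos_iff.mpr h2) 2
      rwa [normsq_eq] at h3
    rcases eq_or_ne x 0 with hx0 | hx0
    · have : N *ᵥ uf = 0 := by rw [hNx, hw, hx0, Matrix.mulVec_zero]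
      rw [this]
      simpa using mul_pos (by positivity : (0:ℝ) < ε ^ 2) hufpos
    -- main case
    have hq := posdef_complex hRiccati x hx0
    rw [hmap] at hq
    -- star identities
    have hstx : Pc *ᵥ star x = star (Pc *ᵥ x) := by rw [hPc, star_map_mulVec]
    have hBcT : Bcᵀ = Bᵀ.map (Complex.ofReal : ℝ → ℂ) := by
      ext i j; simp [hBc, Matrix.transpose_apply, Matrix.map_apply]
    have hAcT : Acᵀ = Aᵀ.map (Complex.ofReal : ℝ → ℂ) := by
      ext i j; simp [hAc, Matrix.transpose_apply, Matrix.map_apply]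
    have hCcT : Ccᵀ = Cᵀ.map (Complex.ofReal : ℝ → ℂ) := by
      ext i j; simp [hCc, Matrix.transpose_apply, Matrix.map_apply]
    have hstv : star v = Bcᵀ *ᵥ (Pc *ᵥ star x) := by
      rw [hv, hBcT, star_map_mulVec, hstx]
    have hstw : star w = Cc *ᵥ star x := by rw [hw, hCc, star_map_mulVec]
    have hstAx : Ac *ᵥ star x = star (Ac *ᵥ x) := by rw [hAc, star_map_mulVec]
    have hstBu : Bc *ᵥ star uf = star (Bc *ᵥ uf) := by rw [hBc, star_map_mulVec]
    -- compute the four terms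
    have hvPsx : star x ᵥ* Pc = Pc *ᵥ star x := by
      rw [← hPT, Matrix.vecMul_transpose, hPT]
    have hg : ∀ z : Fin m → ℂ, star x ⬝ᵥ (Pc *ᵥ (Bc *ᵥ z)) = star v ⬝ᵥ z := by
      intro z
      rw [dpm, hPT, dpm, hstv]
    have t1 : star x ⬝ᵥ ((Pc * Ac) *ᵥ x)
        = (Complex.I * ω) * (star x ⬝ᵥ (Pc *ᵥ x)) - star v ⬝ᵥ uf := by
      rw [← Matrix.mulVec_mulVec, hAx, Matrix.mulVec_sub, Matrix.mulVec_smul,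
        dotProduct_sub, dotProduct_smul, hg]
      simp [smul_eq_mul]
    have t2 : star x ⬝ᵥ ((Acᵀ * Pc) *ᵥ x)
        = -((Complex.I * ω)) * (star x ⬝ᵥ (Pc *ᵥ x)) - star uf ⬝ᵥ v := by
      rw [← Matrix.mulVec_mulVec, dpm, Matrix.transpose_transpose, hstAx, hAx]
      rw [star_sub, star_smul, ← hstBu]
      rw [sub_dotProduct, smul_dotProduct]
      have : (Bc *ᵥ star uf) ⬝ᵥ (Pc *ᵥ x) = star uf ⬝ᵥ v := by
        rw [dotProduct_comm, dpm, dotProduct_comm, hv]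
      rw [this]
      simp [smul_eq_mul, Complex.star_def, Complex.conj_I, Complex.conj_ofReal]
    have t3 : star x ⬝ᵥ ((Pc * Bc * Bcᵀ * Pc) *ᵥ x) = star v ⬝ᵥ v := by
      have e : (Pc * Bc * Bcᵀ * Pc) *ᵥ x = Pc *ᵥ (Bc *ᵥ v) := by
        rw [hv, Matrix.mulVec_mulVec, Matrix.mulVec_mulVec, Matrix.mulVec_mulVec]
      rw [e, hg]
    have t4 : star x ⬝ᵥ ((Ccᵀ * Cc) *ᵥ x) = star w ⬝ᵥ w := by
      rw [← Matrix.mulVec_mulVec, dpm, Matrix.transpose_transpose, hstw, hw]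
    -- assemble
    have hsum : (star w ⬝ᵥ w).re
        < 2 * (star v ⬝ᵥ uf).re - (ε ^ 2)⁻¹ * (star v ⬝ᵥ v).re := by
      have hexp : star x ⬝ᵥ
          ((-(Pc * Ac + Acᵀ * Pc + (((ε ^ 2)⁻¹ : ℝ) : ℂ) • (Pc * Bc * Bcᵀ * Pc) + Ccᵀ * Cc)) *ᵥ x)
          = -(star x ⬝ᵥ ((Pc * Ac) *ᵥ x) + star x ⬝ᵥ ((Acᵀ * Pc) *ᵥ x)
            + (((ε ^ 2)⁻¹ : ℝ) : ℂ) * (star x ⬝ᵥ ((Pc * Bc * Bcᵀ * Pc) *ᵥ x))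
            + star x ⬝ᵥ ((Ccᵀ * Cc) *ᵥ x)) := by
        rw [Matrix.neg_mulVec, dotProduct_neg]
        rw [Matrix.add_mulVec, Matrix.add_mulVec, Matrix.add_mulVec,
          dotProduct_add, dotProduct_add, dotProduct_add,
          Matrix.smul_mulVec, dotProduct_smul, smul_eq_mul]
      rw [hexp, t1, t2, t3, t4] at hq
      have hconj : star uf ⬝ᵥ v = star (star v ⬝ᵥ uf) := Matrix.star_dotProduct uf v
      rw [hconj] at hq
      simp only [Complex.neg_re, Complex.neg_im, Complex.add_re, Complex.sub_re,
        Complex.mul_re, Complex.mul_im, Complex.ofReal_re, Complex.ofReal_im,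
        Complex.conj_re, Complex.conj_im, Complex.star_def] at hq ⊢
      ring_nf at hq ⊢
      linarith
    -- convert to norms and finish
    set V := (WithLp.equiv 2 (Fin m → ℂ)).symm v with hV
    set U := (WithLp.equiv 2 (Fin m → ℂ)).symm uf with hU
    set W := (WithLp.equiv 2 (Fin p → ℂ)).symm w with hW
    have h1 : (star v ⬝ᵥ v).re = ‖V‖ ^ 2 := (normsq_eq v).symm
    have h2 : (star uf ⬝ᵥ uf).re = ‖U‖ ^ 2 := (normsq_eq uf).symm
    have h3 : (star w ⬝ᵥ w).re = ‖W‖ ^ 2 := (normsq_eq w).symm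
    have h4 : (star v ⬝ᵥ uf).re ≤ ‖V‖ * ‖U‖ := by
      have := re_inner_le_norm (𝕜 := ℂ) V U
      rwa [hV, hU, EuclideanSpace.inner_eq_star_dotProduct, RCLike.re_to_complex, dotProduct_comm] at this
    rw [hNx, h3, h2]
    rw [h3, h1] at hsum
    have hVn : 0 ≤ ‖V‖ := norm_nonneg _
    have hUn : 0 ≤ ‖U‖ := norm_nonneg _
    have hinv : (ε ^ 2)⁻¹ * ε ^ 2 = 1 := by
      field_simp
    nlinarith [sq_nonneg (ε⁻¹ * ‖V‖ - ε * ‖U‖), sq_nonneg ‖V‖, mul_pos hε hε,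
      sq_nonneg (‖V‖ - ε ^ 2 * ‖U‖)]
  -- from pointwise strict bound to operator norm strict bound
  have happly : ∀ u : EuclideanSpace ℂ (Fin m),
      T u = (WithLp.equiv 2 (Fin p → ℂ)).symm (N *ᵥ (WithLp.equiv 2 (Fin m → ℂ)) u) := by
    intro u; rfl
  have hTu : ∀ u : EuclideanSpace ℂ (Fin m), u ≠ 0 → ‖T u‖ < ε * ‖u‖ := by
    intro u hu
    set uf := (WithLp.equiv 2 (Fin m → ℂ)) u with huf
    have hufne : uf ≠ 0 := by
      intro h
      apply hu
      have := congrArg (WithLp.equiv 2 (Fin m → ℂ)).symm h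
      simpa [huf] using this
    have hk := hkey uf hufne
    have e1 : ‖T u‖ ^ 2 = (star (N *ᵥ uf) ⬝ᵥ (N *ᵥ uf)).re := by
      rw [happly u, normsq_eq]
    have e2 : ‖u‖ ^ 2 = (star uf ⬝ᵥ uf).re := by
      have : u = (WithLp.equiv 2 (Fin m → ℂ)).symm uf := by simp [huf]
      rw [this, normsq_eq]
    have : ‖T u‖ ^ 2 < (ε * ‖u‖) ^ 2 := by
      rw [e1, mul_pow, e2]; exact hk
    exact lt_of_pow_lt_pow_left₀ 2 (by positivity) this
  rcases isEmpty_or_nonempty (Fin m) with hm | hm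
  · have hT0 : T = 0 := by
      ext u
      have : u = 0 := Subsingleton.elim u 0
      rw [this, map_zero]
      rfl
    rw [hT0]
    simpa using hε
  · -- sphere is compact and nonempty
    have hsne : (Metric.sphere (0 : EuclideanSpace ℂ (Fin m)) 1).Nonempty := by
      refine ⟨EuclideanSpace.single (Classical.arbitrary (Fin m)) 1, ?_⟩
      simp [EuclideanSpace.norm_single]
    obtain ⟨u₀, hu₀s, hmax⟩ := (isCompact_sphere (0 : EuclideanSpace ℂ (Fin m)) 1).exists_isMaxOn
      hsne (T.continuous.norm.continuousOn)
    have hu₀ : ‖u₀‖ = 1 := mem_sphere_zero_iff_norm.mp hu₀s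
    have hu₀ne : u₀ ≠ 0 := by
      intro h; rw [h, norm_zero] at hu₀; norm_num at hu₀
    have hbound : ‖T‖ ≤ ‖T u₀‖ := by
      refine T.opNorm_le_bound (norm_nonneg _) fun u => ?_
      by_cases hu : u = 0
      · simp [hu]
      · have hc : (0:ℝ) < ‖u‖ := norm_pos_iff.mpr hu
        set u' : EuclideanSpace ℂ (Fin m) := ((‖u‖⁻¹ : ℝ) : ℂ) • u with hu'
        have hu'n : ‖u'‖ = 1 := by
          rw [hu', norm_smul]
          simp [abs_of_pos hc, inv_mul_cancel₀ (ne_of_gt hc)]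
        have hmem : u' ∈ Metric.sphere (0 : EuclideanSpace ℂ (Fin m)) 1 := by
          simp [mem_sphere_zero_iff_norm, hu'n]
        have hle : ‖T u'‖ ≤ ‖T u₀‖ := hmax hmem
        have : T u = ((‖u‖ : ℝ) : ℂ) • T u' := by
          rw [hu', _root_.map_smul, smul_smul]
          norm_cast
          rw [mul_inv_cancel₀ (ne_of_gt hc)]
          simp
        rw [this, norm_smul]
        simp only [Complex.norm_real, Real.norm_eq_abs, abs_of_pos hc]
        calc ‖u‖ * ‖T u'‖ ≤ ‖u‖ * ‖T u₀‖ := by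
              exact mul_le_mul_of_nonneg_left hle (le_of_lt hc)
          _ = ‖T u₀‖ * ‖u‖ := by ring
    calc ‖T‖ ≤ ‖T u₀‖ := hbound
      _ < ε * ‖u₀‖ := hTu u₀ hu₀ne
      _ = ε := by rw [hu₀]; ring
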